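/- arXiv:1712.07364 — 3 statements merged into one kernel-verified Lean document; each statement's English description precedes it below -/
import Mathlib

section
/- For every x > 0 and every θ ≠ 0, the derivative with respect to θ of the Box-Cox transformation, namely (1/θ²)·((θ·log x − 1)·x^θ + 1), is nonnegative. Consequently, for each fixed x > 0 the map θ ↦ Λ_θ(x) is monotone nondecreasing on ℝ \ {0}. -/
/-- The Box-Cox transformation. -/
noncomputable def boxCox (θ x : ℝ) : ℝ :=
  if θ = 0 then Real.log x else (x ^ θ - 1) / θ

private lemma key_ineq (t : ℝ) : 0 ≤ (t - 1) * Real.exp t + 1 := by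
  have h : 1 - t ≤ Real.exp (-t) := by linarith [Real.add_one_le_exp (-t)]
  have hm : (1 - t) * Real.exp t ≤ Real.exp (-t) * Real.exp t :=
    mul_le_mul_of_nonneg_right h (Real.exp_pos t).le
  rw [← Real.exp_add] at hm
  simp at hm
  linarith

private lemma deriv_expr_nonneg (x : ℝ) (hx : 0 < x) (θ : ℝ) :
    0 ≤ (θ * Real.log x - 1) * x ^ θ + 1 := by
  have : x ^ θ = Real.exp (θ * Real.log x) := by
    rw [Real.rpow_def_of_pos hx, mul_comm]
  rw [this]
  exact key_ineq _

private lemma hasDerivAt_f (x : ℝ) (hx : 0 < x) {θ : ℝ} (hθ : θ ≠ 0) :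
    HasDerivAt (fun t : ℝ => (x ^ t - 1) / t)
      ((1 / θ ^ 2) * ((θ * Real.log x - 1) * x ^ θ + 1)) θ := by
  have h1 : HasDerivAt (fun t : ℝ => x ^ t - 1) (x ^ θ * Real.log x) θ :=
    ((Real.hasStrictDerivAt_const_rpow hx θ).hasDerivAt).sub_const 1
  have h2 : HasDerivAt (fun t : ℝ => t) 1 θ := hasDerivAt_id θ
  have : HasDerivAt (fun t : ℝ => (x ^ t - 1) / t)
      ((x ^ θ * Real.log x * θ - (x ^ θ - 1) * 1) / θ ^ 2) θ := h1.div h2 hθ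
  convert this using 1
  field_simp
  ring

/-- For every `x > 0` and `θ ≠ 0`, the derivative in `θ` of the Box-Cox
transformation, namely `(1/θ²)·((θ·log x − 1)·x^θ + 1)`, is nonnegative;
consequently `θ ↦ Λ_θ(x)` is monotone nondecreasing on `ℝ \ {0}`. -/
theorem boxCox_deriv_nonneg_and_mono (x : ℝ) (hx : 0 < x) :
    (∀ θ : ℝ, θ ≠ 0 → 0 ≤ (1 / θ ^ 2) * ((θ * Real.log x - 1) * x ^ θ + 1)) ∧
    (∀ θ₁ θ₂ : ℝ, θ₁ ≠ 0 → θ₂ ≠ 0 → θ₁ ≤ θ₂ → boxCox θ₁ x ≤ boxCox θ₂ x) := by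
  set f : ℝ → ℝ := fun t => (x ^ t - 1) / t with hf
  have hderiv : ∀ θ : ℝ, θ ≠ 0 → HasDerivAt f
      ((1 / θ ^ 2) * ((θ * Real.log x - 1) * x ^ θ + 1)) θ :=
    fun θ hθ => hasDerivAt_f x hx hθ
  have hnonneg : ∀ θ : ℝ, θ ≠ 0 →
      0 ≤ (1 / θ ^ 2) * ((θ * Real.log x - 1) * x ^ θ + 1) := by
    intro θ hθ
    have h1 : (0:ℝ) ≤ 1 / θ ^ 2 := by positivity
    exact mul_nonneg h1 (deriv_expr_nonneg x hx θ)
  refine ⟨hnonneg, ?_⟩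
  -- monotonicity on each side of 0
  have hmono : ∀ s : Set ℝ, Convex ℝ s → IsOpen s → (∀ t ∈ s, t ≠ 0) → MonotoneOn f s := by
    intro s hconv hopen hs
    apply monotoneOn_of_deriv_nonneg hconv
    · intro t ht
      exact (hderiv t (hs t ht)).continuousAt.continuousWithinAt
    · intro t ht
      rw [hopen.interior_eq] at ht
      exact (hderiv t (hs t ht)).differentiableAt.differentiableWithinAt
    · intro t ht
      rw [hopen.interior_eq] at ht
      rw [(hderiv t (hs t ht)).deriv]
      exact hnonneg t (hs t ht)
  have hpos : MonotoneOn f (Set.Ioi 0) :=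
    hmono _ (convex_Ioi 0) isOpen_Ioi (fun t ht => ne_of_gt ht)
  have hneg : MonotoneOn f (Set.Iio 0) :=
    hmono _ (convex_Iio 0) isOpen_Iio (fun t ht => ne_of_lt ht)
  -- bridge: x^θ - 1 ≥ θ log x
  have hbridge : ∀ θ : ℝ, θ * Real.log x ≤ x ^ θ - 1 := by
    intro θ
    have : x ^ θ = Real.exp (θ * Real.log x) := by
      rw [Real.rpow_def_of_pos hx, mul_comm]
    rw [this]
    linarith [Real.add_one_le_exp (θ * Real.log x)]
  intro θ₁ θ₂ h1 h2 hle
  rw [boxCox, boxCox, if_neg h1, if_neg h2]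
  show f θ₁ ≤ f θ₂
  rcases lt_or_gt_of_ne h1 with hn1 | hp1
  · rcases lt_or_gt_of_ne h2 with hn2 | hp2
    · exact hneg hn1 hn2 hle
    · have left : f θ₁ ≤ Real.log x := by
        rw [hf]
        rw [div_le_iff_of_neg hn1]
        linarith [hbridge θ₁]
      have right : Real.log x ≤ f θ₂ := by
        rw [hf]
        rw [le_div_iff₀ hp2]
        linarith [hbridge θ₂]
      linarith
  · have hp2 : 0 < θ₂ := lt_of_lt_of_le hp1 hle
    exact hpos hp1 hp2 hle
end

section
/- For every x > 0, the second derivative of the Box-Cox transformation Λ_θ(x) with respect to θ is nonnegative for x ≥ 1 and nonpositive for 0 < x ≤ 1 (for all θ ≠ 0). Hence θ ↦ Λ̇_θ(x) is monotone increasing in θ when x ≥ 1 and monotone decreasing in θ when 0 < x < 1. -/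
open Real Filter

private lemma bc_phi_mono : Monotone (fun y : ℝ => ((y - 1) ^ 2 + 1) * Real.exp y) := by
  apply monotone_of_hasDerivAt_nonneg (f' := fun y => y ^ 2 * Real.exp y)
  · intro y
    have h1 : HasDerivAt (fun y : ℝ => (y - 1) ^ 2 + 1) (2 * (y - 1)) y := by
      have := (((hasDerivAt_id y).sub_const 1).pow 2).add_const 1
      simpa using this
    have h := h1.mul (Real.hasDerivAt_exp y)
    refine h.congr_deriv ?_
    ring
  · intro y
    positivity

private lemma bc_rpow_deriv {x : ℝ} (hx : 0 < x) (t : ℝ) :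
    HasDerivAt (fun t : ℝ => x ^ t) (x ^ t * Real.log x) t :=
  (Real.hasStrictDerivAt_const_rpow hx t).hasDerivAt

/-- derivative of the Box–Cox map. -/
private lemma bc_hasDerivAt_g {x : ℝ} (hx : 0 < x) {t : ℝ} (ht : t ≠ 0) :
    HasDerivAt (fun t : ℝ => (x ^ t - 1) / t)
      (1 / t ^ 2 * ((t * Real.log x - 1) * x ^ t + 1)) t := by
  have hu : HasDerivAt (fun t : ℝ => x ^ t - 1) (x ^ t * Real.log x) t :=
    (bc_rpow_deriv hx t).sub_const 1
  have h := hu.div (hasDerivAt_id t) ht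
  refine h.congr_deriv ?_
  simp only [id]
  field_simp
  ring

/-- derivative of Λ̇. -/
private lemma bc_hasDerivAt_D {x : ℝ} (hx : 0 < x) {t : ℝ} (ht : t ≠ 0) :
    HasDerivAt (fun t : ℝ => 1 / t ^ 2 * ((t * Real.log x - 1) * x ^ t + 1))
      ((((t * Real.log x - 1) ^ 2 + 1) * x ^ t - 2) / t ^ 3) t := by
  have hN : HasDerivAt (fun t : ℝ => (t * Real.log x - 1) * x ^ t + 1)
      (Real.log x * x ^ t + (t * Real.log x - 1) * (x ^ t * Real.log x)) t := by
    have h1 : HasDerivAt (fun t : ℝ => t * Real.log x - 1) (Real.log x) t := by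
      simpa using ((hasDerivAt_id t).mul_const (Real.log x)).sub_const 1
    exact (h1.mul (bc_rpow_deriv hx t)).add_const 1
  have hden : HasDerivAt (fun t : ℝ => t ^ 2) (2 * t) t := by
    simpa using hasDerivAt_pow 2 t
  have h := hN.div hden (pow_ne_zero 2 ht)
  have hfun : (fun t : ℝ => 1 / t ^ 2 * ((t * Real.log x - 1) * x ^ t + 1)) =
      fun t : ℝ => ((t * Real.log x - 1) * x ^ t + 1) / t ^ 2 := by
    funext s; ring
  rw [hfun]
  refine h.congr_deriv ?_
  field_simp
  ring

private lemma bc_E_nonneg {x : ℝ} (hx : 0 < x) (hx1 : 1 ≤ x) {t : ℝ} (ht : t ≠ 0) :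
    0 ≤ (((t * Real.log x - 1) ^ 2 + 1) * x ^ t - 2) / t ^ 3 := by
  have hL : 0 ≤ Real.log x := Real.log_nonneg hx1
  have hxp : x ^ t = Real.exp (t * Real.log x) := by
    rw [Real.rpow_def_of_pos hx, mul_comm]
  have hphi0 : ((0:ℝ) - 1) ^ 2 + 1 = 2 := by norm_num
  rcases lt_or_gt_of_ne ht with htn | htp
  · have hy : t * Real.log x ≤ 0 := mul_nonpos_of_nonpos_of_nonneg htn.le hL
    have := bc_phi_mono hy
    simp only [hphi0, Real.exp_zero, mul_one] at this
    rw [hxp]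
    have hnum : (((t * Real.log x - 1) ^ 2 + 1) * Real.exp (t * Real.log x) - 2) ≤ 0 := by
      linarith
    have ht3 : t ^ 3 < 0 := Odd.pow_neg ⟨1, by norm_num⟩ htn
    rw [div_nonneg_iff]
    exact Or.inr ⟨hnum, ht3.le⟩
  · have hy : 0 ≤ t * Real.log x := mul_nonneg htp.le hL
    have := bc_phi_mono hy
    simp only [hphi0, Real.exp_zero, mul_one] at this
    rw [hxp]
    have hnum : 0 ≤ (((t * Real.log x - 1) ^ 2 + 1) * Real.exp (t * Real.log x) - 2) := by
      linarith
    exact div_nonneg hnum (by positivity)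

private lemma bc_E_nonpos {x : ℝ} (hx : 0 < x) (hx1 : x ≤ 1) {t : ℝ} (ht : t ≠ 0) :
    (((t * Real.log x - 1) ^ 2 + 1) * x ^ t - 2) / t ^ 3 ≤ 0 := by
  have hL : Real.log x ≤ 0 := Real.log_nonpos hx.le hx1
  have hxp : x ^ t = Real.exp (t * Real.log x) := by
    rw [Real.rpow_def_of_pos hx, mul_comm]
  have hphi0 : ((0:ℝ) - 1) ^ 2 + 1 = 2 := by norm_num
  rcases lt_or_gt_of_ne ht with htn | htp
  · have hy : 0 ≤ t * Real.log x := by nlinarith [htn.le, hL]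
    have := bc_phi_mono hy
    simp only [hphi0, Real.exp_zero, mul_one] at this
    rw [hxp]
    have hnum : 0 ≤ (((t * Real.log x - 1) ^ 2 + 1) * Real.exp (t * Real.log x) - 2) := by
      linarith
    have ht3 : t ^ 3 < 0 := Odd.pow_neg ⟨1, by norm_num⟩ htn
    exact div_nonpos_of_nonneg_of_nonpos hnum ht3.le
  · have hy : t * Real.log x ≤ 0 := mul_nonpos_of_nonneg_of_nonpos htp.le hL
    have := bc_phi_mono hy
    simp only [hphi0, Real.exp_zero, mul_one] at this
    rw [hxp]
    have hnum : (((t * Real.log x - 1) ^ 2 + 1) * Real.exp (t * Real.log x) - 2) ≤ 0 := by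
      linarith
    exact div_nonpos_of_nonpos_of_nonneg hnum (by positivity)

private lemma bc_iteratedDeriv_eq {x : ℝ} (hx : 0 < x) {θ : ℝ} (hθ : θ ≠ 0) :
    iteratedDeriv 2 (fun t : ℝ => (x ^ t - 1) / t) θ =
      (((θ * Real.log x - 1) ^ 2 + 1) * x ^ θ - 2) / θ ^ 3 := by
  rw [iteratedDeriv_succ, iteratedDeriv_one]
  have hev : (deriv fun t : ℝ => (x ^ t - 1) / t) =ᶠ[nhds θ]
      (fun t : ℝ => 1 / t ^ 2 * ((t * Real.log x - 1) * x ^ t + 1)) := by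
    filter_upwards [eventually_ne_nhds hθ] with t ht
    exact (bc_hasDerivAt_g hx ht).deriv
  rw [hev.deriv_eq]
  exact (bc_hasDerivAt_D hx hθ).deriv

/-- h(θ) = (θL−1)x^θ + 1 − θ²L²/2 is monotone when x ≥ 1. -/
private lemma bc_h_mono {x : ℝ} (hx : 0 < x) (hx1 : 1 ≤ x) :
    Monotone (fun t : ℝ =>
      (t * Real.log x - 1) * x ^ t + 1 - t ^ 2 * Real.log x ^ 2 / 2) := by
  have hL : 0 ≤ Real.log x := Real.log_nonneg hx1
  apply monotone_of_hasDerivAt_nonneg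
    (f' := fun t => t * Real.log x ^ 2 * (x ^ t - 1))
  · intro t
    have h1 : HasDerivAt (fun t : ℝ => t * Real.log x - 1) (Real.log x) t := by
      simpa using ((hasDerivAt_id t).mul_const (Real.log x)).sub_const 1
    have hN := (h1.mul (bc_rpow_deriv hx t)).add_const 1
    have hq : HasDerivAt (fun t : ℝ => t ^ 2 * Real.log x ^ 2 / 2)
        (t * Real.log x ^ 2) t := by
      have := (hasDerivAt_pow 2 t).mul_const (Real.log x ^ 2)
      have h2 := this.div_const 2
      refine h2.congr_deriv ?_
      ring
    have h := hN.sub hq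
    refine h.congr_deriv ?_
    ring
  · intro t
    have key : 0 ≤ t * (x ^ t - 1) := by
      rcases le_or_gt 0 t with h0 | h0
      · have : 1 ≤ x ^ t := Real.one_le_rpow hx1 h0
        exact mul_nonneg h0 (by linarith)
      · have : x ^ t ≤ 1 := Real.rpow_le_one_of_one_le_of_nonpos hx1 h0.le
        nlinarith
    have hm := mul_nonneg (sq_nonneg (Real.log x)) key
    have heq : t * Real.log x ^ 2 * (x ^ t - 1) =
        Real.log x ^ 2 * (t * (x ^ t - 1)) := by ring
    simpa [heq] using hm

/-- h antitone when x ≤ 1. -/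
private lemma bc_h_anti {x : ℝ} (hx : 0 < x) (hx1 : x ≤ 1) :
    Antitone (fun t : ℝ =>
      (t * Real.log x - 1) * x ^ t + 1 - t ^ 2 * Real.log x ^ 2 / 2) := by
  have hL : Real.log x ≤ 0 := Real.log_nonpos hx.le hx1
  apply antitone_of_hasDerivAt_nonpos
    (f' := fun t => t * Real.log x ^ 2 * (x ^ t - 1))
  · intro t
    have h1 : HasDerivAt (fun t : ℝ => t * Real.log x - 1) (Real.log x) t := by
      simpa using ((hasDerivAt_id t).mul_const (Real.log x)).sub_const 1
    have hN := (h1.mul (bc_rpow_deriv hx t)).add_const 1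
    have hq : HasDerivAt (fun t : ℝ => t ^ 2 * Real.log x ^ 2 / 2)
        (t * Real.log x ^ 2) t := by
      have := (hasDerivAt_pow 2 t).mul_const (Real.log x ^ 2)
      have h2 := this.div_const 2
      refine h2.congr_deriv ?_
      ring
    have h := hN.sub hq
    refine h.congr_deriv ?_
    ring
  · intro t
    have key : t * (x ^ t - 1) ≤ 0 := by
      rcases le_or_gt 0 t with h0 | h0
      · have : x ^ t ≤ 1 := Real.rpow_le_one hx.le hx1 h0
        exact mul_nonpos_of_nonneg_of_nonpos h0 (by linarith)
      · have : 1 ≤ x ^ t := Real.one_le_rpow_of_pos_of_le_one_of_nonpos hx hx1 h0.le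
        nlinarith
    have hm := mul_nonpos_of_nonneg_of_nonpos (sq_nonneg (Real.log x)) key
    have heq : t * Real.log x ^ 2 * (x ^ t - 1) =
        Real.log x ^ 2 * (t * (x ^ t - 1)) := by ring
    simpa [heq] using hm

/-- For every `x > 0`, the second derivative in `θ` of the Box-Cox transformation
`Λ_θ(x) = (x^θ−1)/θ` is nonnegative for `x ≥ 1` and nonpositive for `0 < x ≤ 1`
(for all `θ ≠ 0`); hence `θ ↦ Λ̇_θ(x) = (1/θ²)((θ log x − 1)x^θ + 1)` is monotone
nondecreasing in `θ` when `x ≥ 1` and monotone nonincreasing when `0 < x < 1`. -/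
theorem boxCox_second_deriv_sign_and_dot_monotone (x : ℝ) (hx : 0 < x) :
    (∀ θ : ℝ, θ ≠ 0 → 1 ≤ x →
      0 ≤ iteratedDeriv 2 (fun t : ℝ => (x ^ t - 1) / t) θ) ∧
    (∀ θ : ℝ, θ ≠ 0 → x ≤ 1 →
      iteratedDeriv 2 (fun t : ℝ => (x ^ t - 1) / t) θ ≤ 0) ∧
    (1 ≤ x → ∀ θ₁ θ₂ : ℝ, θ₁ ≠ 0 → θ₂ ≠ 0 → θ₁ < θ₂ →
      (1 / θ₁ ^ 2) * ((θ₁ * Real.log x - 1) * x ^ θ₁ + 1) ≤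
        (1 / θ₂ ^ 2) * ((θ₂ * Real.log x - 1) * x ^ θ₂ + 1)) ∧
    (x < 1 → ∀ θ₁ θ₂ : ℝ, θ₁ ≠ 0 → θ₂ ≠ 0 → θ₁ < θ₂ →
      (1 / θ₂ ^ 2) * ((θ₂ * Real.log x - 1) * x ^ θ₂ + 1) ≤
        (1 / θ₁ ^ 2) * ((θ₁ * Real.log x - 1) * x ^ θ₁ + 1)) := by
  set D : ℝ → ℝ := fun t => 1 / t ^ 2 * ((t * Real.log x - 1) * x ^ t + 1) with hD
  set h : ℝ → ℝ := fun t =>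
    (t * Real.log x - 1) * x ^ t + 1 - t ^ 2 * Real.log x ^ 2 / 2 with hh
  have hh0 : h 0 = 0 := by simp [hh]
  have hDh : ∀ t : ℝ, t ≠ 0 → D t = h t / t ^ 2 + Real.log x ^ 2 / 2 := by
    intro t ht
    simp only [hD, hh]
    field_simp
    ring
  refine ⟨?_, ?_, ?_, ?_⟩
  · intro θ hθ hx1
    rw [bc_iteratedDeriv_eq hx hθ]
    exact bc_E_nonneg hx hx1 hθ
  · intro θ hθ hx1
    rw [bc_iteratedDeriv_eq hx hθ]
    exact bc_E_nonpos hx hx1 hθ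
  · -- monotone case, x ≥ 1
    intro hx1 θ₁ θ₂ h1 h2 hlt
    have monIoi : MonotoneOn D (Set.Ioi (0:ℝ)) := by
      apply monotoneOn_of_hasDerivWithinAt_nonneg (convex_Ioi 0)
        (f' := fun t => (((t * Real.log x - 1) ^ 2 + 1) * x ^ t - 2) / t ^ 3)
      · intro t ht
        exact ((bc_hasDerivAt_D hx (ne_of_gt ht)).continuousAt).continuousWithinAt
      · rw [interior_Ioi]
        intro t ht
        exact (bc_hasDerivAt_D hx (ne_of_gt ht)).hasDerivWithinAt
      · rw [interior_Ioi]
        intro t ht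
        exact bc_E_nonneg hx hx1 (ne_of_gt ht)
    have monIio : MonotoneOn D (Set.Iio (0:ℝ)) := by
      apply monotoneOn_of_hasDerivWithinAt_nonneg (convex_Iio 0)
        (f' := fun t => (((t * Real.log x - 1) ^ 2 + 1) * x ^ t - 2) / t ^ 3)
      · intro t ht
        exact ((bc_hasDerivAt_D hx (ne_of_lt ht)).continuousAt).continuousWithinAt
      · rw [interior_Iio]
        intro t ht
        exact (bc_hasDerivAt_D hx (ne_of_lt ht)).hasDerivWithinAt
      · rw [interior_Iio]
        intro t ht
        exact bc_E_nonneg hx hx1 (ne_of_lt ht)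
    rcases lt_or_gt_of_ne h1 with h1n | h1p
    · rcases lt_or_gt_of_ne h2 with h2n | h2p
      · exact monIio h1n h2n hlt.le
      · -- θ₁ < 0 < θ₂ : go through log x ^ 2 / 2
        have hb1 : D θ₁ ≤ Real.log x ^ 2 / 2 := by
          rw [hDh θ₁ h1]
          have : h θ₁ ≤ 0 := hh0 ▸ bc_h_mono hx hx1 h1n.le
          have h2' : h θ₁ / θ₁ ^ 2 ≤ 0 :=
            div_nonpos_of_nonpos_of_nonneg this (sq_nonneg θ₁)
          linarith
        have hb2 : Real.log x ^ 2 / 2 ≤ D θ₂ := by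
          rw [hDh θ₂ h2]
          have : 0 ≤ h θ₂ := hh0 ▸ bc_h_mono hx hx1 h2p.le
          have h2' : 0 ≤ h θ₂ / θ₂ ^ 2 := div_nonneg this (sq_nonneg θ₂)
          linarith
        exact hb1.trans hb2
    · have h2p : 0 < θ₂ := lt_trans h1p hlt
      exact monIoi h1p h2p hlt.le
  · -- antitone case, x < 1
    intro hx1 θ₁ θ₂ h1 h2 hlt
    have hx1' : x ≤ 1 := hx1.le
    have antIoi : AntitoneOn D (Set.Ioi (0:ℝ)) := by
      apply antitoneOn_of_hasDerivWithinAt_nonpos (convex_Ioi 0)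
        (f' := fun t => (((t * Real.log x - 1) ^ 2 + 1) * x ^ t - 2) / t ^ 3)
      · intro t ht
        exact ((bc_hasDerivAt_D hx (ne_of_gt ht)).continuousAt).continuousWithinAt
      · rw [interior_Ioi]
        intro t ht
        exact (bc_hasDerivAt_D hx (ne_of_gt ht)).hasDerivWithinAt
      · rw [interior_Ioi]
        intro t ht
        exact bc_E_nonpos hx hx1' (ne_of_gt ht)
    have antIio : AntitoneOn D (Set.Iio (0:ℝ)) := by
      apply antitoneOn_of_hasDerivWithinAt_nonpos (convex_Iio 0)
        (f' := fun t => (((t * Real.log x - 1) ^ 2 + 1) * x ^ t - 2) / t ^ 3)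
      · intro t ht
        exact ((bc_hasDerivAt_D hx (ne_of_lt ht)).continuousAt).continuousWithinAt
      · rw [interior_Iio]
        intro t ht
        exact (bc_hasDerivAt_D hx (ne_of_lt ht)).hasDerivWithinAt
      · rw [interior_Iio]
        intro t ht
        exact bc_E_nonpos hx hx1' (ne_of_lt ht)
    rcases lt_or_gt_of_ne h1 with h1n | h1p
    · rcases lt_or_gt_of_ne h2 with h2n | h2p
      · exact antIio h1n h2n hlt.le
      · have hb2 : D θ₂ ≤ Real.log x ^ 2 / 2 := by
          rw [hDh θ₂ h2]
          have : h θ₂ ≤ 0 := hh0 ▸ bc_h_anti hx hx1' h2p.le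
          have h2' : h θ₂ / θ₂ ^ 2 ≤ 0 :=
            div_nonpos_of_nonpos_of_nonneg this (sq_nonneg θ₂)
          linarith
        have hb1 : Real.log x ^ 2 / 2 ≤ D θ₁ := by
          rw [hDh θ₁ h1]
          have : 0 ≤ h θ₁ := hh0 ▸ bc_h_anti hx hx1' h1n.le
          have h2' : 0 ≤ h θ₁ / θ₁ ^ 2 := div_nonneg this (sq_nonneg θ₁)
          linarith
        exact hb2.trans hb1
    · have h2p : 0 < θ₂ := lt_trans h1p hlt
      exact antIoi h1p h2p hlt.le
end

section
/- Let Y, X be random variables, let ε = Λ(Y) − m(X) with m(X) = E[Λ(Y) | X], assume Var(ε | X) = σ² is constant, and let ε̇ = Λ̇(Y) − ṁ(X) with ṁ(X) = E[Λ̇(Y) | X]. For scalars (h₂, h₄) the Gateaux derivative at r = 0 of r ↦ E[ −(h₄₀ + r(h₄−h₄₀))/(2(σ² + r(h₂−σ²))) + ((h₄₀+r(h₄−h₄₀))/(2(σ²+r(h₂−σ²))²))·ε² − (1/(σ²+r(h₂−σ²)))·ε·ε̇ | X ] equals −(h₄−h₄₀)/(2σ²) + h₄₀(h₂−σ²)/(2σ⁴)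 + (h₄−h₄₀)/(2σ²) − h₄₀(h₂−σ²)/σ⁴ + (h₂−σ²)/σ⁴·E[ε·ε̇ | X], which vanishes when h₄₀ = 2E[ε·ε̇ | X]. -/
/-- The Gateaux-derivative computation behind Neyman orthogonality in the
transformation model. Here `s = σ² = E[ε²|X] > 0` (constant conditional
variance), `b = E[ε·ε̇|X]`, and `(h₂, h₄)` is the direction of the perturbation
of the nuisance parameters `(σ², σ̇²)`, with `h₄₀ = σ̇²`. The derivative at
`r = 0` of the conditional expectation of the score part equals the displayed
expression, which vanishes when `h₄₀ = 2·E[ε·ε̇|X]`. -/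
theorem neyman_orthogonality_gateaux_derivative
    (s b h₂ h₄ h₄₀ : ℝ) (hs : 0 < s) :
    HasDerivAt
      (fun r : ℝ =>
        -((h₄₀ + r * (h₄ - h₄₀)) / (2 * (s + r * (h₂ - s))))
          + ((h₄₀ + r * (h₄ - h₄₀)) / (2 * (s + r * (h₂ - s)) ^ 2)) * s
          - (1 / (s + r * (h₂ - s))) * b)
      (-((h₄ - h₄₀) / (2 * s)) + h₄₀ * (h₂ - s) / (2 * s ^ 2)
        + (h₄ - h₄₀) / (2 * s) - h₄₀ * (h₂ - s) / s ^ 2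
        + (h₂ - s) / s ^ 2 * b) 0 ∧
    (h₄₀ = 2 * b →
      -((h₄ - h₄₀) / (2 * s)) + h₄₀ * (h₂ - s) / (2 * s ^ 2)
        + (h₄ - h₄₀) / (2 * s) - h₄₀ * (h₂ - s) / s ^ 2
        + (h₂ - s) / s ^ 2 * b = 0) := by
  have hs0 : s ≠ 0 := ne_of_gt hs
  constructor
  · have hu : HasDerivAt (fun r : ℝ => s + r * (h₂ - s)) (h₂ - s) 0 := by
      simpa using ((hasDerivAt_id (0:ℝ)).mul_const (h₂ - s)).const_add s
    have hv : HasDerivAt (fun r : ℝ => h₄₀ + r * (h₄ - h₄₀)) (h₄ - h₄₀) 0 := by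
      simpa using ((hasDerivAt_id (0:ℝ)).mul_const (h₄ - h₄₀)).const_add h₄₀
    have hu0 : s + (0:ℝ) * (h₂ - s) ≠ 0 := by simpa using hs0
    have h2u : HasDerivAt (fun r : ℝ => 2 * (s + r * (h₂ - s))) (2 * (h₂ - s)) 0 :=
      hu.const_mul 2
    have h2u0 : 2 * (s + (0:ℝ) * (h₂ - s)) ≠ 0 := by simpa using hs0
    have h2usq : HasDerivAt (fun r : ℝ => 2 * (s + r * (h₂ - s)) ^ 2)
        (2 * (2 * (s + (0:ℝ) * (h₂ - s)) ^ 1 * (h₂ - s))) 0 := (hu.pow 2).const_mul 2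
    have h2usq0 : 2 * (s + (0:ℝ) * (h₂ - s)) ^ 2 ≠ 0 :=
      mul_ne_zero two_ne_zero (pow_ne_zero _ hu0)
    have hA := (hv.div h2u h2u0).neg
    have hB := (hv.div h2usq h2usq0).mul_const s
    have hC := ((hasDerivAt_const (0:ℝ) (1:ℝ)).div hu hu0).mul_const b
    have := (hA.add hB).sub hC
    refine this.congr_deriv ?_
    field_simp
    ring
  · intro h
    subst h
    field_simp
    ring
end
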